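/- Let P(r,s|a,b) be a nonsignaling box, let ρ(r,𝐬|a)∈V(P), let ρ(a) be a probability distribution on {1,…,A}, and let λ(r,s,a,b) be arbitrary real coefficients. Then the mutual information of the channel ρ(𝐬|a)=Σ_r ρ(r,𝐬|a) with input ρ(a) satisfies I(A;𝐒) ≥ Σ_{r,s,a,b} P(r,s|a,b)ρ(a)λ(r,s,a,b) + K_λ, where K_λ = −log max_{𝐬∈𝓢^B} Σ_a ρ(a) max_r exp(Σ_b λ(r,s_b,a,b)). -/

import Mathlib

open scoped BigOperators

/-- A probability distribution on a finite type. -/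
def IsDist {α : Type*} [Fintype α] (q : α → ℝ) : Prop :=
  (∀ x, 0 ≤ q x) ∧ ∑ x, q x = 1

/-- Mutual information of the channel `W` with input distribution `q`
(convention `0 · log 0 = 0`, automatic since `Real.log 0 = 0`). -/
noncomputable def mutInfo {X Y : Type*} [Fintype X] [Fintype Y]
    (W : Y → X → ℝ) (q : X → ℝ) : ℝ :=
  ∑ y, ∑ x, W y x * q x * Real.log (W y x / ∑ x', W y x' * q x')

/-- A nonsignaling box `P(r,s|a,b)`. -/
def IsNSBox {R S : Type*} [Fintype R] [Fintype S] {A B : ℕ}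
    (P : R → S → Fin A → Fin B → ℝ) : Prop :=
  (∀ r s a b, 0 ≤ P r s a b) ∧
  (∀ a b, ∑ r, ∑ s, P r s a b = 1) ∧
  (∀ a r b b', ∑ s, P r s a b = ∑ s, P r s a b') ∧
  (∀ b s a a', ∑ r, P r s a b = ∑ r, P r s a' b)

/-- Membership in the set `V(P)`: `ρ(r,𝐬|a)` is a conditional probability over
`r` and sequences `𝐬 ∈ 𝓢^B` whose marginal on `(r, s_b)` is `P(r,s|a,b)`. -/
def MemV {R S : Type*} [Fintype R] [Fintype S] [DecidableEq S] {A B : ℕ}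
    (P : R → S → Fin A → Fin B → ℝ)
    (ρ : R → (Fin B → S) → Fin A → ℝ) : Prop :=
  (∀ r ss a, 0 ≤ ρ r ss a) ∧
  (∀ a, ∑ r, ∑ ss : Fin B → S, ρ r ss a = 1) ∧
  (∀ a b r s, ∑ ss : Fin B → S, (if ss b = s then ρ r ss a else 0) = P r s a b)


/-- For every `ρ ∈ V(P)`, input distribution `ρ(a)`, and arbitrary real
coefficients `λ(r,s,a,b)`, the mutual information of the channel
`ρ(𝐬|a) = Σ_r ρ(r,𝐬|a)` is bounded from below by
`Σ_{r,s,a,b} P(r,s|a,b) ρ(a) λ(r,s,a,b) + K_λ`, where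
`K_λ = −log max_𝐬 Σ_a ρ(a) max_r exp(Σ_b λ(r,s_b,a,b))`. -/
theorem stmt6 {R S : Type*} [Fintype R] [Fintype S] [DecidableEq S]
    [Nonempty R] [Nonempty S] {A B : ℕ}
    (P : R → S → Fin A → Fin B → ℝ) (hP : IsNSBox P)
    (ρ : R → (Fin B → S) → Fin A → ℝ) (hρ : MemV P ρ)
    (q : Fin A → ℝ) (hq : IsDist q)
    (lam : R → S → Fin A → Fin B → ℝ) :
    (∑ r, ∑ s, ∑ a, ∑ b, P r s a b * q a * lam r s a b)
      + (-Real.log (⨆ ss : Fin B → S,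
          ∑ a, q a * ⨆ r, Real.exp (∑ b, lam r (ss b) a b)))
    ≤ mutInfo (fun ss a => ∑ r, ρ r ss a) q := by
  classical
  obtain ⟨hρ0, hρ1, hρ2⟩ := hρ
  obtain ⟨hq0, hq1⟩ := hq
  -- abbreviations
  set W : (Fin B → S) → Fin A → ℝ := fun ss a => ∑ r, ρ r ss a with hWdef
  set L : R → (Fin B → S) → Fin A → ℝ := fun r ss a => ∑ b, lam r (ss b) a b with hLdef
  set E : Fin A → (Fin B → S) → ℝ := fun a ss => ⨆ r, Real.exp (L r ss a) with hEdef
  set Wb : (Fin B → S) → ℝ := fun ss => ∑ a, W ss a * q a with hWbdef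
  set M : ℝ := ⨆ ss : Fin B → S, ∑ a, q a * E a ss with hMdef
  -- basic positivity facts
  have hWnn : ∀ ss a, 0 ≤ W ss a := fun ss a =>
    Finset.sum_nonneg fun r _ => hρ0 r ss a
  have hWbnn : ∀ ss, 0 ≤ Wb ss := fun ss =>
    Finset.sum_nonneg fun a _ => mul_nonneg (hWnn ss a) (hq0 a)
  have hEbdd : ∀ a ss, BddAbove (Set.range fun r => Real.exp (L r ss a)) :=
    fun a ss => Set.Finite.bddAbove (Set.finite_range _)
  have hexpE : ∀ r ss a, Real.exp (L r ss a) ≤ E a ss := fun r ss a =>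
    le_ciSup (hEbdd a ss) r
  have hEpos : ∀ a ss, 0 < E a ss := by
    intro a ss
    obtain ⟨r⟩ : Nonempty R := inferInstance
    exact lt_of_lt_of_le (Real.exp_pos _) (hexpE r ss a)
  have hLlogE : ∀ r ss a, L r ss a ≤ Real.log (E a ss) := by
    intro r ss a
    exact (Real.le_log_iff_exp_le (hEpos a ss)).2 (hexpE r ss a)
  have hMbdd : BddAbove (Set.range fun ss : Fin B → S => ∑ a, q a * E a ss) :=
    Set.Finite.bddAbove (Set.finite_range _)
  have hSleM : ∀ ss : Fin B → S, ∑ a, q a * E a ss ≤ M := fun ss =>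
    le_ciSup hMbdd ss
  have hSnn : ∀ ss : Fin B → S, 0 ≤ ∑ a, q a * E a ss := fun ss =>
    Finset.sum_nonneg fun a _ => mul_nonneg (hq0 a) (hEpos a ss).le
  have hMpos : 0 < M := by
    obtain ⟨ss0⟩ : Nonempty (Fin B → S) := inferInstance
    obtain ⟨a0, ha0⟩ : ∃ a, q a ≠ 0 := by
      by_contra h
      push_neg at h
      simp [h] at hq1
    have hqa0 : 0 < q a0 := lt_of_le_of_ne (hq0 a0) (Ne.symm ha0)
    have h1 : 0 < q a0 * E a0 ss0 := mul_pos hqa0 (hEpos a0 ss0)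
    have h2 : q a0 * E a0 ss0 ≤ ∑ a, q a * E a ss0 :=
      Finset.single_le_sum (fun a _ => mul_nonneg (hq0 a) (hEpos a ss0).le)
        (Finset.mem_univ a0)
    exact lt_of_lt_of_le h1 (h2.trans (hSleM ss0))
  -- sums of W and Wb
  have hWsum : ∀ a, ∑ ss : Fin B → S, W ss a = 1 := by
    intro a
    rw [show (∑ ss : Fin B → S, W ss a) = ∑ ss : Fin B → S, ∑ r, ρ r ss a from rfl,
      Finset.sum_comm]
    exact hρ1 a
  have hWbsum : ∑ ss : Fin B → S, Wb ss = 1 := by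
    rw [show (∑ ss : Fin B → S, Wb ss) = ∑ ss : Fin B → S, ∑ a, W ss a * q a from rfl,
      Finset.sum_comm]
    simp only [← Finset.sum_mul, hWsum, one_mul]
    exact hq1
  -- key pointwise inequality
  have key : ∀ (ss : Fin B → S) (a : Fin A),
      W ss a * q a * Real.log (E a ss) - W ss a * q a * Real.log M
        + (W ss a * q a - q a * Wb ss * E a ss / M)
      ≤ W ss a * q a * Real.log (W ss a / Wb ss) := by
    intro ss a
    by_cases hqa : q a = 0
    · simp [hqa, mul_nonneg (hWbnn ss) (hEpos a ss).le, hMpos.le,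
        div_nonneg (mul_nonneg (mul_nonneg (hq0 a) (hWbnn ss)) (hEpos a ss).le) hMpos.le]
    by_cases hWa : W ss a = 0
    · simp only [hWa, zero_mul, mul_zero, sub_zero, zero_sub, zero_add]
      have : 0 ≤ q a * Wb ss * E a ss / M :=
        div_nonneg (mul_nonneg (mul_nonneg (hq0 a) (hWbnn ss)) (hEpos a ss).le) hMpos.le
      linarith
    have hqa' : 0 < q a := lt_of_le_of_ne (hq0 a) (Ne.symm hqa)
    have hWa' : 0 < W ss a := lt_of_le_of_ne (hWnn ss a) (Ne.symm hWa)
    have hWb' : 0 < Wb ss := by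
      have : W ss a * q a ≤ Wb ss :=
        Finset.single_le_sum (fun a' _ => mul_nonneg (hWnn ss a') (hq0 a'))
          (Finset.mem_univ a)
      exact lt_of_lt_of_le (mul_pos hWa' hqa') this
    set x : ℝ := Wb ss * E a ss / (W ss a * M) with hxdef
    have hx : 0 < x :=
      div_pos (mul_pos hWb' (hEpos a ss)) (mul_pos hWa' hMpos)
    have hlog : Real.log x ≤ x - 1 := Real.log_le_sub_one_of_pos hx
    have hlogx : Real.log x = Real.log (Wb ss) + Real.log (E a ss)
        - (Real.log (W ss a) + Real.log M) := by
      rw [hxdef, Real.log_div (mul_pos hWb' (hEpos a ss)).ne' (mul_pos hWa' hMpos).ne',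
        Real.log_mul hWb'.ne' (hEpos a ss).ne', Real.log_mul hWa'.ne' hMpos.ne']
    have hWqx : W ss a * q a * x = q a * Wb ss * E a ss / M := by
      field_simp [hxdef]
      rw [hxdef]
      field_simp [hWa'.ne', hMpos.ne']
    have hlogdiv : Real.log (W ss a / Wb ss) = Real.log (W ss a) - Real.log (Wb ss) :=
      Real.log_div hWa'.ne' hWb'.ne'
    have hmul : W ss a * q a * Real.log x ≤ W ss a * q a * (x - 1) :=
      mul_le_mul_of_nonneg_left hlog (by positivity)
    rw [hlogx] at hmul
    rw [hlogdiv]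
    nlinarith [hmul, hWqx]
  -- the marginal identity
  have marg : ∀ (r : R) (a : Fin A) (b : Fin B),
      ∑ ss : Fin B → S, ρ r ss a * lam r (ss b) a b
        = ∑ s, P r s a b * lam r s a b := by
    intro r a b
    calc ∑ ss : Fin B → S, ρ r ss a * lam r (ss b) a b
        = ∑ ss : Fin B → S, ∑ s, (if ss b = s then ρ r ss a else 0) * lam r s a b := by
          apply Finset.sum_congr rfl
          intro ss _
          simp [ite_mul, Finset.sum_ite_eq]
      _ = ∑ s, (∑ ss : Fin B → S, (if ss b = s then ρ r ss a else 0)) * lam r s a b := by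
          rw [Finset.sum_comm]
          simp [Finset.sum_mul]
      _ = ∑ s, P r s a b * lam r s a b := by
          simp only [hρ2]
  -- rewriting the linear term
  have lin : ∑ r, ∑ s, ∑ a, ∑ b, P r s a b * q a * lam r s a b
      = ∑ ss : Fin B → S, ∑ a, q a * ∑ r, ρ r ss a * L r ss a := by
    have hrhs : ∑ ss : Fin B → S, ∑ a, q a * ∑ r, ρ r ss a * L r ss a
        = ∑ a, ∑ r, ∑ b, q a * ∑ s, P r s a b * lam r s a b := by
      calc ∑ ss : Fin B → S, ∑ a, q a * ∑ r, ρ r ss a * L r ss a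
          = ∑ ss : Fin B → S, ∑ a, ∑ r, ∑ b, q a * (ρ r ss a * lam r (ss b) a b) := by
            apply Finset.sum_congr rfl; intro ss _
            apply Finset.sum_congr rfl; intro a _
            simp only [hLdef, Finset.mul_sum]
        _ = ∑ a, ∑ ss : Fin B → S, ∑ r, ∑ b, q a * (ρ r ss a * lam r (ss b) a b) :=
            Finset.sum_comm
        _ = ∑ a, ∑ r, ∑ ss : Fin B → S, ∑ b, q a * (ρ r ss a * lam r (ss b) a b) :=
            Finset.sum_congr rfl fun a _ => Finset.sum_comm
        _ = ∑ a, ∑ r, ∑ b, ∑ ss : Fin B → S, q a * (ρ r ss a * lam r (ss b) a b) :=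
            Finset.sum_congr rfl fun a _ => Finset.sum_congr rfl fun r _ => Finset.sum_comm
        _ = ∑ a, ∑ r, ∑ b, q a * ∑ s, P r s a b * lam r s a b := by
            apply Finset.sum_congr rfl; intro a _
            apply Finset.sum_congr rfl; intro r _
            apply Finset.sum_congr rfl; intro b _
            rw [← Finset.mul_sum, marg]
    rw [hrhs]
    calc ∑ r, ∑ s, ∑ a, ∑ b, P r s a b * q a * lam r s a b
        = ∑ r, ∑ a, ∑ s, ∑ b, P r s a b * q a * lam r s a b :=
          Finset.sum_congr rfl fun r _ => Finset.sum_comm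
      _ = ∑ a, ∑ r, ∑ s, ∑ b, P r s a b * q a * lam r s a b := Finset.sum_comm
      _ = ∑ a, ∑ r, ∑ b, ∑ s, P r s a b * q a * lam r s a b :=
          Finset.sum_congr rfl fun a _ => Finset.sum_congr rfl fun r _ => Finset.sum_comm
      _ = ∑ a, ∑ r, ∑ b, q a * ∑ s, P r s a b * lam r s a b := by
          apply Finset.sum_congr rfl; intro a _
          apply Finset.sum_congr rfl; intro r _
          apply Finset.sum_congr rfl; intro b _
          rw [Finset.mul_sum]
          exact Finset.sum_congr rfl fun s _ => by ring
  -- identify the sup in the goal with M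
  have hgoal : (⨆ ss : Fin B → S,
      ∑ a, q a * ⨆ r, Real.exp (∑ b, lam r (ss b) a b)) = M := by
    simp only [hMdef, hEdef, hLdef]
  have hMI : mutInfo W q
      = ∑ ss : Fin B → S, ∑ a, W ss a * q a * Real.log (W ss a / Wb ss) := by
    simp only [mutInfo, hWbdef, hWdef]
  -- termwise bound for the linear part
  have F1 : ∀ (ss : Fin B → S) (a : Fin A),
      q a * ∑ r, ρ r ss a * L r ss a ≤ W ss a * q a * Real.log (E a ss) := by
    intro ss a
    have h1 : ∑ r, ρ r ss a * L r ss a ≤ W ss a * Real.log (E a ss) := by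
      rw [hWdef]
      simp only
      rw [Finset.sum_mul]
      exact Finset.sum_le_sum fun r _ =>
        mul_le_mul_of_nonneg_left (hLlogE r ss a) (hρ0 r ss a)
    calc q a * ∑ r, ρ r ss a * L r ss a
        ≤ q a * (W ss a * Real.log (E a ss)) :=
          mul_le_mul_of_nonneg_left h1 (hq0 a)
      _ = W ss a * q a * Real.log (E a ss) := by ring
  have F2 : ∑ ss : Fin B → S, ∑ a, W ss a * q a = 1 := hWbsum
  have F3 : ∑ ss : Fin B → S, ∑ a, q a * Wb ss * E a ss / M ≤ 1 := by
    have hss : ∀ ss : Fin B → S, ∑ a, q a * Wb ss * E a ss / M ≤ Wb ss := by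
      intro ss
      have heq : ∑ a, q a * Wb ss * E a ss / M
          = Wb ss / M * ∑ a, q a * E a ss := by
        rw [Finset.mul_sum]
        exact Finset.sum_congr rfl fun a _ => by ring
      rw [heq]
      calc Wb ss / M * ∑ a, q a * E a ss ≤ Wb ss / M * M :=
            mul_le_mul_of_nonneg_left (hSleM ss) (div_nonneg (hWbnn ss) hMpos.le)
        _ = Wb ss := by field_simp
    calc ∑ ss : Fin B → S, ∑ a, q a * Wb ss * E a ss / M
        ≤ ∑ ss : Fin B → S, Wb ss := Finset.sum_le_sum fun ss _ => hss ss
      _ = 1 := hWbsum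
  -- assemble
  rw [lin, hMI]
  have hsum_key : ∑ ss : Fin B → S, ∑ a,
      (W ss a * q a * Real.log (E a ss) - W ss a * q a * Real.log M
        + (W ss a * q a - q a * Wb ss * E a ss / M))
      ≤ ∑ ss : Fin B → S, ∑ a, W ss a * q a * Real.log (W ss a / Wb ss) :=
    Finset.sum_le_sum fun ss _ => Finset.sum_le_sum fun a _ => key ss a
  have hsplit : ∑ ss : Fin B → S, ∑ a,
      (W ss a * q a * Real.log (E a ss) - W ss a * q a * Real.log M
        + (W ss a * q a - q a * Wb ss * E a ss / M))
      = (∑ ss : Fin B → S, ∑ a, W ss a * q a * Real.log (E a ss))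
        - Real.log M
        + (1 - ∑ ss : Fin B → S, ∑ a, q a * Wb ss * E a ss / M) := by
    have e1 : ∑ ss : Fin B → S, ∑ a, W ss a * q a * Real.log M
        = Real.log M := by
      simp only [← Finset.sum_mul]
      rw [F2, one_mul]
    simp only [Finset.sum_add_distrib, Finset.sum_sub_distrib]
    rw [e1, F2]
  have hlinle : ∑ ss : Fin B → S, ∑ a, q a * ∑ r, ρ r ss a * L r ss a
      ≤ ∑ ss : Fin B → S, ∑ a, W ss a * q a * Real.log (E a ss) :=
    Finset.sum_le_sum fun ss _ => Finset.sum_le_sum fun a _ => F1 ss a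
  linarith [hsum_key, hsplit, hlinle, F3]
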